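/- Let A be a unital algebra over a field and let a₁, a₂ ∈ A satisfy a₁² = 0 and a₂² = 0. Then σ(a₁ + a₂) \ {0} = {λ : λ² ∈ σ(a₂a₁)} \ {0}. -/

import Mathlib

lemma aux_isUnit {𝕜 A : Type*} [Field 𝕜] [Ring A] [Algebra 𝕜 A]
    (c : A) (hc : c * c = 0) {μ : 𝕜} (hμ : μ ≠ 0) :
    IsUnit (algebraMap 𝕜 A μ + c) := by
  set m := algebraMap 𝕜 A μ
  refine ⟨⟨m + c, (μ^2)⁻¹ • (m - c), ?_, ?_⟩, rfl⟩
  · have : (m + c) * (m - c) = algebraMap 𝕜 A (μ^2) := by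
      simp only [m, mul_sub, add_mul, ← Algebra.commutes μ c, hc, ← map_mul, sq]
      abel
    rw [mul_smul_comm, this, Algebra.algebraMap_eq_smul_one, smul_smul,
      inv_mul_cancel₀ (pow_ne_zero _ hμ), one_smul]
  · have : (m - c) * (m + c) = algebraMap 𝕜 A (μ^2) := by
      simp only [m, mul_add, sub_mul, ← Algebra.commutes μ c, hc, ← map_mul, sq]
      abel
    rw [smul_mul_assoc, this, Algebra.algebraMap_eq_smul_one, smul_smul,
      inv_mul_cancel₀ (pow_ne_zero _ hμ), one_smul]

theorem spectrum_add_eq_sq_mem_spectrum_mul_swap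
    {𝕜 A : Type*} [Field 𝕜] [Ring A] [Algebra 𝕜 A]
    (a₁ a₂ : A) (h₁ : a₁ * a₁ = 0) (h₂ : a₂ * a₂ = 0) :
    spectrum 𝕜 (a₁ + a₂) \ {0} = {μ : 𝕜 | μ ^ 2 ∈ spectrum 𝕜 (a₂ * a₁)} \ {0} := by
  ext μ
  simp only [Set.mem_diff, Set.mem_singleton_iff, Set.mem_setOf_eq]
  refine and_congr_left fun hμ => ?_
  -- swap a₂ * a₁ to a₁ * a₂
  have hs := Set.ext_iff.mp (spectrum.nonzero_mul_comm (𝕜 := 𝕜) a₂ a₁) (μ ^ 2)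
  simp only [Set.mem_diff, Set.mem_singleton_iff, pow_ne_zero _ hμ, not_false_iff,
    and_true] at hs
  rw [hs, spectrum.mem_iff, spectrum.mem_iff, not_iff_not]
  set m := algebraMap 𝕜 A μ with hm_def
  obtain ⟨U1, hU1⟩ := aux_isUnit a₁ h₁ hμ
  obtain ⟨U2, hU2⟩ := aux_isUnit a₂ h₂ hμ
  have hm : IsUnit m := (isUnit_iff_ne_zero.mpr hμ).map (algebraMap 𝕜 A)
  obtain ⟨M, hM⟩ := hm
  have key : (m + a₁) * ((a₁ + a₂) - m) * (m + a₂)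
      = m * (a₁ * a₂ - algebraMap 𝕜 A (μ ^ 2)) := by
    simp only [hm_def, Algebra.algebraMap_eq_smul_one, mul_add, add_mul, sub_mul, mul_sub,
      smul_mul_assoc, mul_smul_comm, smul_smul, h₁, h₂, one_mul, mul_one, smul_sub, smul_add,
      smul_zero, pow_two, mul_assoc]
    simp only [h₂, mul_zero, zero_mul, smul_zero, add_zero]
    abel
  have step : IsUnit ((a₁ + a₂) - m) ↔ IsUnit (a₁ * a₂ - algebraMap 𝕜 A (μ ^ 2)) := by
    constructor
    · intro h
      have h' : IsUnit ((m + a₁) * ((a₁ + a₂) - m) * (m + a₂)) := by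
        exact ((hU1 ▸ (Units.isUnit U1)).mul h).mul (hU2 ▸ Units.isUnit U2)
      rw [key, ← hM] at h'
      exact (Units.isUnit_units_mul M _).mp h'
    · intro h
      have h' : IsUnit ((m + a₁) * ((a₁ + a₂) - m) * (m + a₂)) := by
        rw [key, ← hM]
        exact (Units.isUnit_units_mul M _).mpr h
      rw [← hU1, ← hU2] at h'
      exact (Units.isUnit_units_mul U1 _).mp ((Units.isUnit_mul_units _ U2).mp h')
  constructor
  · intro h
    have := step.mp (by rw [← IsUnit.neg_iff, neg_sub]; exact h)
    rw [← IsUnit.neg_iff, neg_sub] at this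
    exact this
  · intro h
    have := step.mpr (by rw [← IsUnit.neg_iff, neg_sub]; exact h)
    rw [← IsUnit.neg_iff, neg_sub] at this
    exact this
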